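/- Fix r ≥ 4 and integers e_1, …, e_r with e_i ≥ 2 for all i. Call a tuple (a_2, …, a_{r−2}) of positive integers admissible if each of the triples (e_1, e_2, a_2), (a_2, e_3, a_3), (a_3, e_4, a_4), …, (a_{r−3}, e_{r−2}, a_{r−2}), (a_{r−2}, e_{r−1}, e_r) satisfies: each entry of the triple is at most the sum of the other two, and the sum of the three entries is odd. Then for any two admissible tuples a = (a_2, …, a_{r−2}) and b = (b_2, …, b_{r−2}), there exist N ≥ 0 and admissible tuples c^0 = a, c^1, …, c^N = b such that for each 0 ≤ j < N, the tuples c^j and c^{j+1} differ in exactly one index. -/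
import Mathlib


/-- The condition on a triple `(x, y, z)`: each entry is at most the sum of the other
two, and the sum of the three entries is odd. -/
def TriOK (x y z : ℕ) : Prop :=
  x ≤ y + z ∧ y ≤ x + z ∧ z ≤ x + y ∧ Odd (x + y + z)

/-- Admissibility of a tuple `(a₂, …, a_{r-2})` (here `a i` is `a_{i+2}`) of positive
integers: each of the triples `(e₁, e₂, a₂), (a₂, e₃, a₃), …, (a_{r-3}, e_{r-2},
a_{r-2}), (a_{r-2}, e_{r-1}, e_r)` satisfies `TriOK`. -/
def Admissible (r : ℕ) (hr : 4 ≤ r) (e : Fin r → ℕ) (a : Fin (r - 3) → ℕ) : Prop :=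
  (∀ i, 0 < a i) ∧
  TriOK (e ⟨0, by omega⟩) (e ⟨1, by omega⟩) (a ⟨0, by omega⟩) ∧
  (∀ (i : ℕ) (h : i + 1 < r - 3),
    TriOK (a ⟨i, by omega⟩) (e ⟨i + 2, by omega⟩) (a ⟨i + 1, h⟩)) ∧
  TriOK (a ⟨r - 4, by omega⟩) (e ⟨r - 2, by omega⟩) (e ⟨r - 1, by omega⟩)

namespace AdmConn

variable {n i j v d : ℕ} {E A B : ℕ → ℕ}

lemma triOK_iff {x y z : ℕ} :
    TriOK x y z ↔ x ≤ y + z ∧ y ≤ x + z ∧ z ≤ x + y ∧ (x + y + z) % 2 = 1 := by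
  unfold TriOK; rw [Nat.odd_iff]

/-- update a function at one point -/
def upd (A : ℕ → ℕ) (i v : ℕ) : ℕ → ℕ := fun j => if j = i then v else A j

/-- the extended sequence: boundary values `E 0` and `E (n+2)`, interior values of `A` -/
def extSeq (n : ℕ) (E A : ℕ → ℕ) (j : ℕ) : ℕ :=
  if j = 0 then E 0 else if j ≤ n then A (j - 1) else E (n + 2)

/-- `ℕ`-world admissibility -/
def NAdm (n : ℕ) (E A : ℕ → ℕ) : Prop :=
  (∀ i < n, 0 < A i) ∧
  ∀ i ≤ n, TriOK (extSeq n E A i) (E (i + 1)) (extSeq n E A (i + 1))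

lemma extSeq_zero : extSeq n E A 0 = E 0 := by unfold extSeq; rw [if_pos rfl]

lemma extSeq_pos (h1 : 1 ≤ j) (h2 : j ≤ n) : extSeq n E A j = A (j - 1) := by
  unfold extSeq; rw [if_neg (by omega), if_pos h2]

lemma extSeq_mid (h : j < n) : extSeq n E A (j + 1) = A j :=
  extSeq_pos (by omega) (by omega)

lemma extSeq_hi (h : n < j) : extSeq n E A j = E (n + 2) := by
  unfold extSeq; rw [if_neg (by omega), if_neg (by omega)]

lemma parity (hA : NAdm n E A) (hB : NAdm n E B) :
    ∀ i ≤ n + 1, extSeq n E A i % 2 = extSeq n E B i % 2 := by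
  intro i
  induction i with
  | zero => intro _; rw [extSeq_zero, extSeq_zero]
  | succ k ih =>
    intro hk
    have h1 := hA.2 k (by omega)
    have h2 := hB.2 k (by omega)
    rw [triOK_iff] at h1 h2
    have h3 := ih (by omega)
    omega

lemma extSeq_upd (hi : i < n) (j : ℕ) :
    extSeq n E (upd A i v) j = if j = i + 1 then v else extSeq n E A j := by
  unfold extSeq upd
  split_ifs <;> first | rfl | omega

lemma NAdm_upd (hA : NAdm n E A) (hi : i < n)
    (h1 : A i + 2 ≤ extSeq n E A i + E (i + 1))
    (h2 : A i + 2 ≤ E (i + 2) + extSeq n E A (i + 2)) :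
    NAdm n E (upd A i (A i + 2)) := by
  obtain ⟨hpos, htri⟩ := hA
  refine ⟨fun j hj => ?_, fun j hj => ?_⟩
  · show 0 < if j = i then A i + 2 else A j
    split_ifs
    · omega
    · exact hpos j hj
  · rw [extSeq_upd hi, extSeq_upd hi]
    by_cases hji : j = i
    · subst hji
      rw [if_neg (by omega), if_pos rfl]
      have t := htri j (by omega)
      rw [extSeq_mid (by omega)] at t
      rw [triOK_iff] at t ⊢
      omega
    · by_cases hji' : j = i + 1
      · subst hji'
        rw [if_pos rfl, if_neg (by omega)]
        show TriOK (A i + 2) (E (i + 2)) (extSeq n E A (i + 2))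
        have t : TriOK (extSeq n E A (i + 1)) (E (i + 2)) (extSeq n E A (i + 2)) :=
          htri (i + 1) hj
        rw [extSeq_mid hi] at t
        rw [triOK_iff] at t ⊢
        omega
      · rw [if_neg hji', if_neg (by omega : ¬(j + 1 = i + 1))]
        exact htri j hj

lemma NAdm_max (hA : NAdm n E A) (hB : NAdm n E B) :
    NAdm n E (fun j => max (A j) (B j)) := by
  have hext : ∀ j, extSeq n E (fun j => max (A j) (B j)) j
      = max (extSeq n E A j) (extSeq n E B j) := by
    intro j; unfold extSeq; split_ifs <;> simp
  refine ⟨fun j hj => ?_, fun j hj => ?_⟩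
  · have := hA.1 j hj
    show 0 < max (A j) (B j)
    omega
  · rw [hext, hext]
    have t1 := hA.2 j hj
    have t2 := hB.2 j hj
    have p1 := parity hA hB j (by omega)
    have p2 := parity hA hB (j + 1) (by omega)
    rw [triOK_iff] at t1 t2 ⊢
    omega

lemma exists_inc (hn : 1 ≤ n) (hE : ∀ i, 2 ≤ E i) (hA : NAdm n E A) (hB : NAdm n E B)
    (hle : ∀ i < n, A i ≤ B i) (i₀ : ℕ) (hi₀ : i₀ < n) (hne : A i₀ ≠ B i₀)
    (hmin : ∀ j < i₀, A j = B j) :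
    ∃ i, i < n ∧ A i + 2 ≤ B i ∧ A i + 2 ≤ extSeq n E A i + E (i + 1) ∧
      A i + 2 ≤ E (i + 2) + extSeq n E A (i + 2) := by
  have hpar : ∀ j, j < n → A j % 2 = B j % 2 := by
    intro j hj
    have := parity hA hB (j + 1) (by omega)
    rwa [extSeq_mid hj, extSeq_mid hj] at this
  by_contra hcon
  push_neg at hcon
  have hblockR : ∀ j, j < n → A j < B j → E (j + 2) + extSeq n E A (j + 2) < A j + 2 →
      j + 1 < n ∧ A (j + 1) < B (j + 1) ∧ A j + 1 = E (j + 2) + A (j + 1) := by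
    intro j hj hlt hblk
    have hpj := hpar j hj
    have htB : TriOK (extSeq n E B (j + 1)) (E (j + 2)) (extSeq n E B (j + 2)) :=
      hB.2 (j + 1) (by omega)
    have htA : TriOK (extSeq n E A (j + 1)) (E (j + 2)) (extSeq n E A (j + 2)) :=
      hA.2 (j + 1) (by omega)
    rw [extSeq_mid hj] at htB htA
    by_cases hcase : j + 1 < n ∧ A (j + 1) ≠ B (j + 1)
    · obtain ⟨hc1, hc2⟩ := hcase
      rw [extSeq_mid hc1] at htA hblk
      rw [triOK_iff] at htA
      have := hle (j + 1) hc1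
      exact ⟨hc1, by omega, by omega⟩
    · exfalso
      have heq : extSeq n E A (j + 2) = extSeq n E B (j + 2) := by
        by_cases h1 : j + 1 < n
        · have h2 : A (j + 1) = B (j + 1) := by
            by_contra hc; exact hcase ⟨h1, hc⟩
          rw [extSeq_mid h1, extSeq_mid h1, h2]
        · rw [extSeq_hi (by omega), extSeq_hi (by omega)]
      rw [heq] at hblk
      rw [triOK_iff] at htB
      omega
  have hlt₀ : A i₀ < B i₀ := lt_of_le_of_ne (hle i₀ hi₀) hne
  have base : i₀ + 1 < n ∧ A (i₀ + 1) < B (i₀ + 1) ∧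
      A i₀ + 1 = E (i₀ + 2) + A (i₀ + 1) := by
    have h2 : A i₀ + 2 ≤ B i₀ := by have := hpar i₀ hi₀; omega
    by_cases hL : A i₀ + 2 ≤ extSeq n E A i₀ + E (i₀ + 1)
    · exact hblockR i₀ hi₀ hlt₀ (hcon i₀ hi₀ h2 hL)
    · exfalso
      have hextEq : extSeq n E A i₀ = extSeq n E B i₀ := by
        cases i₀ with
        | zero => rw [extSeq_zero, extSeq_zero]
        | succ m => rw [extSeq_mid (by omega), extSeq_mid (by omega), hmin m (by omega)]
      have htB : TriOK (extSeq n E B i₀) (E (i₀ + 1)) (extSeq n E B (i₀ + 1)) :=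
        hB.2 i₀ (by omega)
      rw [extSeq_mid hi₀] at htB
      rw [triOK_iff] at htB
      have hp := hpar i₀ hi₀
      rw [hextEq] at hL
      omega
  have hall : ∀ k, i₀ + k + 1 < n ∧ A (i₀ + k + 1) < B (i₀ + k + 1) ∧
      A (i₀ + k) + 1 = E (i₀ + k + 2) + A (i₀ + k + 1) := by
    intro k
    induction k with
    | zero => exact base
    | succ m ihm =>
      obtain ⟨h1, h2, h3⟩ := ihm
      have h2' : A (i₀ + m + 1) + 2 ≤ B (i₀ + m + 1) := by
        have := hpar _ h1; omega
      by_cases hL : A (i₀ + m + 1) + 2 ≤ extSeq n E A (i₀ + m + 1) + E (i₀ + m + 1 + 1)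
      · exact hblockR (i₀ + m + 1) h1 h2 (hcon (i₀ + m + 1) h1 h2' hL)
      · exfalso
        rw [extSeq_mid (by omega : i₀ + m < n)] at hL
        have he2 := hE (i₀ + m + 2)
        have hL' : ¬ (A (i₀ + m + 1) + 2 ≤ A (i₀ + m) + E (i₀ + m + 2)) := hL
        omega
  have := (hall n).1
  omega

/-- chains of admissible tuples -/
def NChain (n : ℕ) (E A B : ℕ → ℕ) : Prop :=
  ∃ N : ℕ, ∃ c : ℕ → ℕ → ℕ, c 0 = A ∧ c N = B ∧ (∀ j ≤ N, NAdm n E (c j)) ∧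
    ∀ j < N, ∃ i, i < n ∧ c j i ≠ c (j + 1) i ∧ ∀ k, c j k ≠ c (j + 1) k → k = i

lemma NChain_refl (h : NAdm n E A) : NChain n E A A :=
  ⟨0, fun _ => A, rfl, rfl, fun _ _ => h, fun j hj => absurd hj (by omega)⟩

lemma NChain_symm (h : NChain n E A B) : NChain n E B A := by
  obtain ⟨N, c, h0, hN, hadm, hstep⟩ := h
  refine ⟨N, fun j => c (N - j), hN, ?_, fun j hj => hadm _ (by omega), fun j hj => ?_⟩
  · show c (N - N) = A
    rw [Nat.sub_self]; exact h0
  · show ∃ i, i < n ∧ c (N - j) i ≠ c (N - (j + 1)) i ∧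
      ∀ k, c (N - j) k ≠ c (N - (j + 1)) k → k = i
    have hidx : N - (j + 1) = N - j - 1 := by omega
    rw [hidx]
    obtain ⟨i, hi, hne, hu⟩ := hstep (N - j - 1) (by omega)
    have h1 : N - j - 1 + 1 = N - j := by omega
    rw [h1] at hne hu
    exact ⟨i, hi, fun h => hne h.symm, fun k hk => hu k (Ne.symm hk)⟩

/-- auxiliary gluing of chains -/
def glue (N1 : ℕ) (c1 c2 : ℕ → ℕ → ℕ) : ℕ → ℕ → ℕ :=
  fun j => if j < N1 then c1 j else c2 (j - N1)

lemma glue_lt {N1 : ℕ} {c1 c2 : ℕ → ℕ → ℕ} (h : j < N1) : glue N1 c1 c2 j = c1 j :=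
  if_pos h

lemma glue_ge {N1 : ℕ} {c1 c2 : ℕ → ℕ → ℕ} (h : ¬ j < N1) :
    glue N1 c1 c2 j = c2 (j - N1) := if_neg h

lemma NChain_trans {C : ℕ → ℕ} (h1 : NChain n E A B) (h2 : NChain n E B C) :
    NChain n E A C := by
  obtain ⟨N1, c1, h10, h1N, h1adm, h1step⟩ := h1
  obtain ⟨N2, c2, h20, h2N, h2adm, h2step⟩ := h2
  refine ⟨N1 + N2, glue N1 c1 c2, ?_, ?_, ?_, ?_⟩
  · by_cases h : 0 < N1
    · rw [glue_lt h]; exact h10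
    · have hN1 : N1 = 0 := by omega
      rw [glue_ge (by omega)]
      rw [show 0 - N1 = 0 from by omega, h20, ← h1N, hN1, h10]
  · rw [glue_ge (by omega), show N1 + N2 - N1 = N2 from by omega, h2N]
  · intro j hj
    by_cases h : j < N1
    · rw [glue_lt h]; exact h1adm j (by omega)
    · rw [glue_ge h]; exact h2adm (j - N1) (by omega)
  · intro j hj
    by_cases hc1' : j + 1 < N1
    · rw [glue_lt (by omega : j < N1), glue_lt hc1']
      exact h1step j (by omega)
    · by_cases hc2' : j + 1 = N1
      · rw [glue_lt (by omega : j < N1), glue_ge (by omega),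
          show j + 1 - N1 = 0 from by omega, h20, ← h1N, ← hc2']
        exact h1step j (by omega)
      · rw [glue_ge (by omega), glue_ge (by omega),
          show j + 1 - N1 = j - N1 + 1 from by omega]
        exact h2step (j - N1) (by omega)

lemma NChain_single (hA : NAdm n E A) (hA' : NAdm n E (upd A i v)) (hi : i < n)
    (hv : v ≠ A i) : NChain n E A (upd A i v) := by
  refine ⟨1, fun j => if j = 0 then A else upd A i v, rfl, rfl, ?_, ?_⟩
  · intro j hj
    show NAdm n E (if j = 0 then A else upd A i v)
    by_cases h : j = 0
    · rw [if_pos h]; exact hA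
    · rw [if_neg h]; exact hA'
  · intro j hj
    have hj0 : j = 0 := by omega
    subst hj0
    show ∃ i', i' < n ∧ A i' ≠ upd A i v i' ∧ ∀ k, A k ≠ upd A i v k → k = i'
    refine ⟨i, hi, ?_, fun k hk => ?_⟩
    · have h : upd A i v i = v := if_pos rfl
      rw [h]; exact fun h' => hv h'.symm
    · by_contra hki
      exact hk ((if_neg hki : upd A i v k = A k)).symm

lemma chain_mono (hn : 1 ≤ n) (hE : ∀ i, 2 ≤ E i) :
    ∀ d A B, NAdm n E A → NAdm n E B → (∀ i < n, A i ≤ B i) →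
      (∀ i, n ≤ i → A i = B i) →
      (∑ i ∈ Finset.range n, (B i - A i)) = d → NChain n E A B := by
  intro d
  induction d using Nat.strong_induction_on with
  | _ d ih =>
    intro A B hA hB hle hout hd
    by_cases hAB : ∀ i < n, A i = B i
    · have hABeq : A = B := funext fun i => by
        by_cases h : i < n
        · exact hAB i h
        · exact hout i (by omega)
      rw [hABeq]; exact NChain_refl hB
    · push_neg at hAB
      have hex : ∃ i, i < n ∧ A i ≠ B i := by
        obtain ⟨i, h1, h2⟩ := hAB; exact ⟨i, h1, h2⟩
      classical
      obtain ⟨hi₀n, hi₀ne⟩ := Nat.find_spec hex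
      have hmin : ∀ j < Nat.find hex, A j = B j := by
        intro j hj
        by_contra hc
        exact Nat.find_min hex hj ⟨by omega, hc⟩
      obtain ⟨i, hi, h2, hL, hR⟩ :=
        exists_inc hn hE hA hB hle (Nat.find hex) hi₀n hi₀ne hmin
      have hA' := NAdm_upd hA hi hL hR
      have hstep := NChain_single hA hA' hi (by omega)
      have hmem : i ∈ Finset.range n := Finset.mem_range.2 hi
      have e1 : (∑ j ∈ (Finset.range n).erase i, (B j - A j)) + (B i - A i)
          = ∑ j ∈ Finset.range n, (B j - A j) :=
        Finset.sum_erase_add _ _ hmem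
      have e2 : (∑ j ∈ (Finset.range n).erase i, (B j - upd A i (A i + 2) j))
            + (B i - upd A i (A i + 2) i)
          = ∑ j ∈ Finset.range n, (B j - upd A i (A i + 2) j) :=
        Finset.sum_erase_add _ _ hmem
      have e3 : ∑ j ∈ (Finset.range n).erase i, (B j - upd A i (A i + 2) j)
          = ∑ j ∈ (Finset.range n).erase i, (B j - A j) :=
        Finset.sum_congr rfl (fun j hj => by
          have hji : j ≠ i := Finset.ne_of_mem_erase hj
          have : upd A i (A i + 2) j = A j := if_neg hji
          rw [this])
      have e4 : upd A i (A i + 2) i = A i + 2 := if_pos rfl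
      have hkey : (∑ j ∈ Finset.range n, (B j - upd A i (A i + 2) j)) + 2 = d := by
        omega
      have hle' : ∀ j < n, upd A i (A i + 2) j ≤ B j := by
        intro j hj
        show (if j = i then A i + 2 else A j) ≤ B j
        split_ifs with h
        · subst h; omega
        · exact hle j hj
      have hout' : ∀ j, n ≤ j → upd A i (A i + 2) j = B j := by
        intro j hj
        show (if j = i then A i + 2 else A j) = B j
        rw [if_neg (by omega)]
        exact hout j hj
      exact NChain_trans hstep
        (ih (d - 2) (by omega) _ B hA' hB hle' hout' (by omega))

end AdmConn

open AdmConn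

lemma adm_to_NAdm (r : ℕ) (hr : 4 ≤ r) (e : Fin r → ℕ) (a : Fin (r - 3) → ℕ)
    (E A : ℕ → ℕ)
    (hEe : ∀ i (h : i < r), E i = e ⟨i, h⟩)
    (hAa : ∀ i (h : i < r - 3), A i = a ⟨i, h⟩)
    (ha : Admissible r hr e a) : NAdm (r - 3) E A := by
  obtain ⟨hpos, h1, h2, h3⟩ := ha
  refine ⟨fun i hi => ?_, fun j hj => ?_⟩
  · rw [hAa i hi]; exact hpos ⟨i, hi⟩
  · by_cases hj0 : j = 0
    · subst hj0
      rw [extSeq_zero, extSeq_pos (j := 0 + 1) (by omega) (by omega)]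
      show TriOK (E 0) (E 1) (A 0)
      rw [hEe 0 (by omega), hEe 1 (by omega), hAa 0 (by omega)]
      exact h1
    · rcases Nat.eq_or_lt_of_le hj with hje | hjlt
      · -- j = r - 3
        subst hje
        rw [extSeq_pos (j := r - 3) (by omega) (le_refl _), extSeq_hi (by omega)]
        rw [show r - 3 + 1 = r - 2 from by omega, show r - 3 + 2 = r - 1 from by omega]
        show TriOK (A (r - 4)) (E (r - 2)) (E (r - 1))
        rw [hAa (r - 4) (by omega), hEe (r - 2) (by omega), hEe (r - 1) (by omega)]
        exact h3
      · -- middle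
        obtain ⟨k, rfl⟩ : ∃ k, j = k + 1 := ⟨j - 1, by omega⟩
        rw [extSeq_pos (j := k + 1) (by omega) (by omega),
          extSeq_pos (j := k + 1 + 1) (by omega) (by omega)]
        show TriOK (A k) (E (k + 2)) (A (k + 1))
        rw [hAa k (by omega), hEe (k + 2) (by omega), hAa (k + 1) (by omega)]
        exact h2 k (by omega)

lemma NAdm_to_adm (r : ℕ) (hr : 4 ≤ r) (e : Fin r → ℕ) (E f : ℕ → ℕ)
    (hEe : ∀ i (h : i < r), E i = e ⟨i, h⟩)
    (hf : NAdm (r - 3) E f) :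
    Admissible r hr e (fun i => f i.val) := by
  obtain ⟨hpos, htri⟩ := hf
  refine ⟨fun i => hpos i.val i.isLt, ?_, fun i h => ?_, ?_⟩
  · have t := htri 0 (by omega)
    rw [extSeq_zero, extSeq_pos (j := 0 + 1) (by omega) (by omega)] at t
    have t' : TriOK (E 0) (E 1) (f 0) := t
    rw [hEe 0 (by omega), hEe 1 (by omega)] at t'
    exact t'
  · have t := htri (i + 1) (by omega)
    rw [extSeq_pos (j := i + 1) (by omega) (by omega),
      extSeq_pos (j := i + 1 + 1) (by omega) (by omega)] at t
    have t' : TriOK (f i) (E (i + 2)) (f (i + 1)) := t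
    rw [hEe (i + 2) (by omega)] at t'
    exact t'
  · have t := htri (r - 3) (le_refl _)
    rw [extSeq_pos (j := r - 3) (by omega) (le_refl _), extSeq_hi (by omega)] at t
    rw [show r - 3 + 1 = r - 2 from by omega, show r - 3 + 2 = r - 1 from by omega] at t
    have t' : TriOK (f (r - 4)) (E (r - 2)) (E (r - 1)) := t
    rw [hEe (r - 2) (by omega), hEe (r - 1) (by omega)] at t'
    exact t'

/-- Any two admissible tuples can be connected by a chain of admissible tuples in
which consecutive tuples differ in exactly one index. -/
theorem admissible_tuples_connected_by_single_index_moves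
    (r : ℕ) (hr : 4 ≤ r) (e : Fin r → ℕ) (he : ∀ i, 2 ≤ e i)
    (a b : Fin (r - 3) → ℕ)
    (ha : Admissible r hr e a) (hb : Admissible r hr e b) :
    ∃ (N : ℕ) (c : ℕ → Fin (r - 3) → ℕ),
      c 0 = a ∧ c N = b ∧ (∀ j ≤ N, Admissible r hr e (c j)) ∧
      ∀ j < N, ∃! i : Fin (r - 3), c j i ≠ c (j + 1) i := by
  classical
  have hn : 1 ≤ r - 3 := by omega
  obtain ⟨N, c, hc0, hcN, hadm, hstep⟩ :
      NChain (r - 3) (fun i => if h : i < r then e ⟨i, h⟩ else 2)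
        (fun i => if h : i < r - 3 then a ⟨i, h⟩ else 0)
        (fun i => if h : i < r - 3 then b ⟨i, h⟩ else 0) := by
    have hEe : ∀ i (h : i < r),
        (fun i => if h : i < r then e ⟨i, h⟩ else 2) i = e ⟨i, h⟩ :=
      fun i h => dif_pos h
    have hE2 : ∀ i, 2 ≤ (fun i => if h : i < r then e ⟨i, h⟩ else 2) i := by
      intro i
      show 2 ≤ if h : i < r then e ⟨i, h⟩ else 2
      by_cases h : i < r
      · rw [dif_pos h]; exact he ⟨i, h⟩
      · rw [dif_neg h]
    have hA := adm_to_NAdm r hr e a (fun i => if h : i < r then e ⟨i, h⟩ else 2)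
      (fun i => if h : i < r - 3 then a ⟨i, h⟩ else 0) hEe (fun i h => dif_pos h) ha
    have hB := adm_to_NAdm r hr e b (fun i => if h : i < r then e ⟨i, h⟩ else 2)
      (fun i => if h : i < r - 3 then b ⟨i, h⟩ else 0) hEe (fun i h => dif_pos h) hb
    have hM := NAdm_max hA hB
    have hout : ∀ i, r - 3 ≤ i →
        (fun i => if h : i < r - 3 then a ⟨i, h⟩ else 0) i
          = (fun j => max ((fun i => if h : i < r - 3 then a ⟨i, h⟩ else 0) j)
              ((fun i => if h : i < r - 3 then b ⟨i, h⟩ else 0) j)) i := by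
      intro i hi
      show (if h : i < r - 3 then a ⟨i, h⟩ else 0)
        = max (if h : i < r - 3 then a ⟨i, h⟩ else 0)
            (if h : i < r - 3 then b ⟨i, h⟩ else 0)
      rw [dif_neg (by omega), dif_neg (by omega)]
      exact (max_self 0).symm
    have hout' : ∀ i, r - 3 ≤ i →
        (fun i => if h : i < r - 3 then b ⟨i, h⟩ else 0) i
          = (fun j => max ((fun i => if h : i < r - 3 then a ⟨i, h⟩ else 0) j)
              ((fun i => if h : i < r - 3 then b ⟨i, h⟩ else 0) j)) i := by
      intro i hi
      show (if h : i < r - 3 then b ⟨i, h⟩ else 0)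
        = max (if h : i < r - 3 then a ⟨i, h⟩ else 0)
            (if h : i < r - 3 then b ⟨i, h⟩ else 0)
      rw [dif_neg (by omega), dif_neg (by omega)]
      exact (max_self 0).symm
    have hch1 := chain_mono hn hE2 _ _ _ hA hM
      (fun i _ => le_max_left _ _) hout rfl
    have hch2 := chain_mono hn hE2 _ _ _ hB hM
      (fun i _ => le_max_right _ _) hout' rfl
    exact NChain_trans hch1 (NChain_symm hch2)
  refine ⟨N, fun j => fun i => c j i.val, ?_, ?_, ?_, ?_⟩
  · funext i
    show c 0 i.val = a i
    rw [hc0]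
    exact dif_pos i.isLt
  · funext i
    show c N i.val = b i
    rw [hcN]
    exact dif_pos i.isLt
  · intro j hj
    exact NAdm_to_adm r hr e (fun i => if h : i < r then e ⟨i, h⟩ else 2) (c j)
      (fun i h => dif_pos h) (hadm j hj)
  · intro j hj
    obtain ⟨i, hi, hne, hu⟩ := hstep j hj
    exact ⟨⟨i, hi⟩, hne, fun k hk => Fin.ext (hu k.val hk)⟩
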